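/- In the representation ring R of U_h(sl_2) over Q(v), the product of Habiro's basis elements satisfies P̃'_m · P̃'_n = ∑_{k=0}^{min(m,n)} q^{-kl} ({m+n}_q! / ({k}_q! {m-k}_q! {n-k}_q!)) P̃'_l, where l = m + n - k, and the coefficient C_{k,m,n}(q) = ({2m+1}_{q,m+1}/{1}_q) · {k}_q! {n-k}_q! [2l+1 choose 2m+1]_q [2(n-k) choose n-k]_q [m+n choose k]_q [m choose k]_q lies in the ideal ({2m+1}_{q,m+1}/{1}_q) · I_n of Z[q,q^{-1}]. -/

import Mathlib

/-!
Statement 18: In the representation ring R ≅ ℚ(v)[V₂] of U_h(sl₂),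
P̃'_m · P̃'_n = ∑_{k=0}^{min(m,n)} q^{-kl} ({m+n}_q!/({k}_q!{m-k}_q!{n-k}_q!)) P̃'_l with
l = m+n-k; and the coefficient C_{k,m,n}(q) lies in ({2m+1}_{q,m+1}/{1}_q)·I_n ⊆ ℤ[q,q⁻¹].
-/

open Finset Polynomial

noncomputable section

/-- The field ℚ(v). -/
abbrev Fv : Type := RatFunc ℚ

/-- the variable v -/
def vv : Fv := RatFunc.X

/-- q = v² -/
def qq : Fv := vv ^ 2

/-- `{i}_q = q^i - 1` in ℚ(v). -/
def qIntF (i : ℤ) : Fv := qq ^ i - 1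

/-- `{i}_{q,n}` in ℚ(v). -/
def qPochF (i : ℤ) (n : ℕ) : Fv := ∏ k ∈ range n, qIntF (i - k)

/-- `{n}_q!` in ℚ(v). -/
def qFactF (n : ℕ) : Fv := qPochF n n

/-- Habiro's basis element `P̃'_l = (v^l/{l}_q!) ∏_{i=0}^{l-1}(V₂ - v^{2i+1} - v^{-2i-1})`,
viewed in the representation ring ℚ(v)[V₂] with `V₂ = X`. -/
def Pt (l : ℕ) : Polynomial Fv :=
  C (vv ^ l / qFactF l) *
    ∏ i ∈ range l, (X - C (vv ^ (2 * (i : ℤ) + 1)) - C (vv ^ (-(2 * (i : ℤ) + 1))))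

/-- `{i}_q = q^i - 1` in `ℤ[q,q⁻¹]`. -/
def qInt (i : ℤ) : LaurentPolynomial ℤ := LaurentPolynomial.T i - 1

/-- `{i}_{q,n}` in `ℤ[q,q⁻¹]`. -/
def qPoch (i : ℤ) (n : ℕ) : LaurentPolynomial ℤ := ∏ k ∈ range n, qInt (i - k)

/-- `{n}_q!` in `ℤ[q,q⁻¹]`. -/
def qFact (n : ℕ) : LaurentPolynomial ℤ := qPoch n n

/-- The ideal `I_l` of `ℤ[q,q⁻¹]`. -/
def Iideal (l : ℕ) : Ideal (LaurentPolynomial ℤ) :=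
  Ideal.span {x | ∃ k ≤ l, x = qFact (l - k) * qFact k}

lemma vv_ne : vv ≠ 0 := RatFunc.X_ne_zero

lemma vv_pow_ne_one {s : ℕ} (hs : s ≠ 0) : vv ^ s ≠ 1 := by
  intro h
  have : (algebraMap (Polynomial ℚ) (RatFunc ℚ)) (Polynomial.X ^ s) =
      (algebraMap (Polynomial ℚ) (RatFunc ℚ)) 1 := by
    simpa [map_pow, RatFunc.algebraMap_X, vv] using h
  have h2 := RatFunc.algebraMap_injective ℚ this
  have := congrArg Polynomial.natDegree h2
  simp [Polynomial.natDegree_X_pow] at this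
  exact hs this

lemma qq_npow (t : ℕ) : qq ^ (t:ℤ) = vv ^ (2*t) := by
  rw [zpow_natCast]
  rw [qq, ← pow_mul, Nat.mul_comm]

lemma qq_zpow_neg (s : ℕ) : qq ^ (-(s:ℤ)) = (vv ^ (2*s))⁻¹ := by
  rw [zpow_neg, qq_npow]

lemma qIntF_natCast (t : ℕ) : qIntF (t:ℤ) = vv ^ (2*t) - 1 := by
  rw [qIntF, qq_npow]

lemma qIntF_nat_ne {t : ℕ} (ht : t ≠ 0) : qIntF (t:ℤ) ≠ 0 := by
  rw [qIntF_natCast, sub_ne_zero]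
  exact vv_pow_ne_one (by omega)

lemma qFactF_ne (n : ℕ) : qFactF n ≠ 0 := by
  rw [qFactF, qPochF]
  rw [Finset.prod_ne_zero_iff]
  intro k hk
  rw [Finset.mem_range] at hk
  have : ((n:ℤ) - k) = ((n - k : ℕ) : ℤ) := by push_cast [Nat.cast_sub hk.le]; ring
  rw [this]
  exact qIntF_nat_ne (by omega)

lemma qFactF_succ (t : ℕ) : qFactF (t+1) = qIntF ((t:ℤ)+1) * qFactF t := by
  rw [qFactF, qFactF, qPochF, qPochF, Finset.prod_range_succ']
  have h1 : (((t:ℕ)+1 : ℕ) : ℤ) - ((0:ℕ):ℤ) = (t:ℤ)+1 := by push_cast; ring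
  rw [h1, mul_comm]
  congr 1
  apply Finset.prod_congr rfl
  intro k _
  congr 1
  push_cast; ring

def xP (i : ℕ) : Polynomial Fv := X - C (vv ^ (2*i+1)) - C ((vv ^ (2*i+1))⁻¹)

lemma Pt_eq (l : ℕ) : Pt l = C (vv ^ l / qFactF l) * ∏ i ∈ range l, xP i := by
  rw [Pt]
  congr 1

lemma Pt_succ (l : ℕ) : Pt (l+1) = C (vv / qIntF ((l:ℤ)+1)) * (xP l * Pt l) := by
  rw [Pt_eq, Pt_eq, Finset.prod_range_succ, qFactF_succ]
  rw [pow_succ]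
  rw [show (vv ^ l * vv / (qIntF ((l:ℤ)+1) * qFactF l)) = (vv / qIntF ((l:ℤ)+1)) * (vv ^ l / qFactF l) by
    rw [div_mul_div_comm]; ring_nf]
  rw [C_mul]
  ring

lemma xP_shift (l : ℕ) : xP l * Pt l = C (qIntF ((l:ℤ)+1) / vv) * Pt (l+1) := by
  rw [Pt_succ, ← mul_assoc, ← C_mul]
  rw [div_mul_div_comm, mul_comm (qIntF ((l:ℤ)+1)) vv, div_self, C_1, one_mul]
  exact mul_ne_zero vv_ne (by exact_mod_cast qIntF_nat_ne (t := l+1) (by omega))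

def dd (l i : ℕ) : Fv := vv^(2*l+1) + (vv^(2*l+1))⁻¹ - vv^(2*i+1) - (vv^(2*i+1))⁻¹

lemma xP_mul_Pt (l i : ℕ) :
    xP i * Pt l = C (qIntF ((l:ℤ)+1) / vv) * Pt (l+1) + C (dd l i) * Pt l := by
  have h : xP i = xP l + C (dd l i) := by
    rw [xP, xP, dd, map_sub, map_sub, map_add]; ring
  rw [h, add_mul, xP_shift]

def cf (k m n : ℕ) : Fv :=
  qq ^ (-((k:ℤ) * ((m:ℤ) + (n:ℤ) - (k:ℤ)))) *
    (qFactF (m+n) / (qFactF k * qFactF (m-k) * qFactF (n-k)))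

lemma qIntF_ne' (t : ℕ) : qIntF ((t:ℤ)+1) ≠ 0 := by
  rw [show (t:ℤ)+1 = ((t+1:ℕ):ℤ) by push_cast; ring]
  exact qIntF_nat_ne (by omega)

lemma qIntF_cast' (t : ℕ) : qIntF ((t:ℤ)+1) = vv^(2*t+2) - 1 := by
  rw [show (t:ℤ)+1 = ((t+1:ℕ):ℤ) by push_cast; ring, qIntF_natCast,
    show 2*(t+1) = 2*t+2 by omega]

lemma qFactF_zero : qFactF 0 = 1 := by simp [qFactF, qPochF]

lemma keyI (m n : ℕ) :
    vv / qIntF ((n:ℤ)+1) * cf 0 m n * (qIntF (((m+n:ℕ):ℤ)+1) / vv) = cf 0 m (n+1) := by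
  rw [cf, cf]
  simp only [Nat.cast_zero, zero_mul, neg_zero, zpow_zero, one_mul, Nat.sub_zero, qFactF_zero]
  rw [show m+(n+1) = (m+n)+1 from rfl, qFactF_succ, qFactF_succ]
  field_simp [vv_ne, qIntF_ne' n, qIntF_ne' (m+n), qFactF_ne]

lemma keyII (m n i : ℕ) (hi : i < n) (h : n < m) :
    vv / qIntF ((n:ℤ)+1) * cf (i+1) m n * (qIntF (((m+n-(i+1):ℕ):ℤ)+1) / vv)
      + vv / qIntF ((n:ℤ)+1) * cf i m n * dd (m+n-i) n
    = cf (i+1) m (n+1) := by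
  obtain ⟨a, rfl⟩ : ∃ a, n = i+1+a := ⟨n-i-1, by omega⟩
  obtain ⟨b, rfl⟩ : ∃ b, m = i+1+a+1+b := ⟨m-(i+1+a)-1, by omega⟩
  rw [cf, cf, cf, dd]
  rw [show i+1+a+1+b + (i+1+a) - (i+1) = i+2*a+b+2 from by omega,
    show i+1+a+1+b + (i+1+a) - i = i+2*a+b+3 from by omega,
    show i+1+a+1+b - (i+1) = a+b+1 from by omega,
    show i+1+a - (i+1) = a from by omega,
    show i+1+a+1+b - i = a+b+1+1 from by omega,
    show i+1+a - i = a+1 from by omega,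
    show i+1+a+1 - (i+1) = a+1 from by omega,
    show i+1+a+1+b + (i+1+a+1) = i+1+a+1+b+(i+1+a)+1 from by omega]
  rw [show -(((i+1:ℕ):ℤ) * (((i+1+a+1+b:ℕ):ℤ) + ((i+1+a:ℕ):ℤ) - ((i+1:ℕ):ℤ)))
      = -((((i+1)*(i+2*a+b+2):ℕ)):ℤ) by push_cast; ring]
  rw [show -((i:ℤ) * (((i+1+a+1+b:ℕ):ℤ) + ((i+1+a:ℕ):ℤ) - (i:ℤ)))
      = -(((i*(i+2*a+b+3):ℕ)):ℤ) by push_cast; ring]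
  rw [show -(((i+1:ℕ):ℤ) * (((i+1+a+1+b:ℕ):ℤ) + ((i+1+a+1:ℕ):ℤ) - ((i+1:ℕ):ℤ)))
      = -((((i+1)*(i+2*a+b+3):ℕ)):ℤ) by push_cast; ring]
  rw [qq_zpow_neg, qq_zpow_neg, qq_zpow_neg]
  rw [qFactF_succ (i+1+a+1+b+(i+1+a)), qFactF_succ (a+b+1),
    qFactF_succ a, qFactF_succ i]
  obtain ⟨A, hA⟩ : ∃ A, qIntF (((i+1+a:ℕ):ℤ)+1) = A := ⟨_, rfl⟩
  obtain ⟨B, hB⟩ : ∃ B, qIntF (((i+2*a+b+2:ℕ):ℤ)+1) = B := ⟨_, rfl⟩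
  obtain ⟨Cc, hC⟩ : ∃ Cc, qIntF (((i+1+a+1+b+(i+1+a):ℕ):ℤ)+1) = Cc := ⟨_, rfl⟩
  obtain ⟨D, hD⟩ : ∃ D, qIntF (((a+b+1:ℕ):ℤ)+1) = D := ⟨_, rfl⟩
  obtain ⟨E, hE⟩ : ∃ E, qIntF ((a:ℤ)+1) = E := ⟨_, rfl⟩
  obtain ⟨G, hG⟩ : ∃ G, qIntF ((i:ℤ)+1) = G := ⟨_, rfl⟩
  have hA0 : A ≠ 0 := hA ▸ qIntF_ne' (i+1+a)
  have hB0 : B ≠ 0 := hB ▸ qIntF_ne' (i+2*a+b+2)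
  have hC0 : Cc ≠ 0 := hC ▸ qIntF_ne' (i+1+a+1+b+(i+1+a))
  have hD0 : D ≠ 0 := hD ▸ qIntF_ne' (a+b+1)
  have hE0 : E ≠ 0 := hE ▸ qIntF_ne' a
  have hG0 : G ≠ 0 := hG ▸ qIntF_ne' i
  rw [hA, hB, hC, hD, hE, hG]
  field_simp [vv_ne, hA0, hB0, hC0, hD0, hE0, hG0, qFactF_ne]
  rw [← hA, ← hB, ← hC, ← hD, ← hE, ← hG,
    qIntF_cast', qIntF_cast', qIntF_cast', qIntF_cast', qIntF_cast', qIntF_cast']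
  ring

lemma keyIII (m n : ℕ) (h : n < m) :
    vv / qIntF ((n:ℤ)+1) * cf n m n * dd m n = cf (n+1) m (n+1) := by
  obtain ⟨b, rfl⟩ : ∃ b, m = n+1+b := ⟨m-n-1, by omega⟩
  rw [cf, cf, dd]
  rw [show -((n:ℤ) * (((n+1+b:ℕ):ℤ) + (n:ℤ) - (n:ℤ))) = -(((n*(n+1+b):ℕ)):ℤ) by push_cast; ring]
  rw [show -(((n+1:ℕ):ℤ) * (((n+1+b:ℕ):ℤ) + ((n+1:ℕ):ℤ) - ((n+1:ℕ):ℤ)))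
      = -((((n+1)*(n+1+b):ℕ)):ℤ) by push_cast; ring]
  rw [qq_zpow_neg, qq_zpow_neg]
  rw [show n+1+b-n = b+1 from by omega, show n-n = 0 from by omega,
    show n+1+b-(n+1) = b from by omega, show (n+1)-(n+1) = 0 from by omega,
    show n+1+b+(n+1) = (n+1+b+n)+1 from by omega]
  rw [qFactF_succ (n+1+b+n), qFactF_succ b, qFactF_succ n, qFactF_zero]
  obtain ⟨A, hA⟩ : ∃ A, qIntF ((n:ℤ)+1) = A := ⟨_, rfl⟩
  obtain ⟨B, hB⟩ : ∃ B, qIntF ((b:ℤ)+1) = B := ⟨_, rfl⟩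
  obtain ⟨Cc, hC⟩ : ∃ Cc, qIntF (((n+1+b+n:ℕ):ℤ)+1) = Cc := ⟨_, rfl⟩
  have hA0 : A ≠ 0 := hA ▸ qIntF_ne' n
  have hB0 : B ≠ 0 := hB ▸ qIntF_ne' b
  have hC0 : Cc ≠ 0 := hC ▸ qIntF_ne' (n+1+b+n)
  rw [hA, hB, hC]
  field_simp [vv_ne, hA0, hB0, hC0, qFactF_ne]
  rw [← hB, ← hC, qIntF_cast', qIntF_cast']
  ring

lemma Pt_zero : Pt 0 = 1 := by
  simp [Pt, qFactF, qPochF]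

lemma main (n : ℕ) : ∀ m, n ≤ m → Pt m * Pt n = ∑ k ∈ range (n+1), C (cf k m n) * Pt (m+n-k) := by
  induction n with
  | zero =>
    intro m _
    rw [Finset.sum_range_one, Pt_zero, mul_one]
    have : cf 0 m 0 = 1 := by
      rw [cf]
      simp [qFactF_zero, div_self (qFactF_ne m)]
    rw [this, C_1, one_mul, show m+0-0 = m from by omega]
  | succ n ih =>
    intro m hm
    have hnm : n ≤ m := by omega
    have e1 : Pt m * Pt (n+1) = C (vv / qIntF ((n:ℤ)+1)) * (xP n * (Pt m * Pt n)) := by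
      rw [Pt_succ]; ring
    rw [e1, ih m hnm, Finset.mul_sum, Finset.mul_sum]
    have e2 : ∀ k ∈ range (n+1),
        C (vv / qIntF ((n:ℤ)+1)) * (xP n * (C (cf k m n) * Pt (m+n-k)))
        = C (vv / qIntF ((n:ℤ)+1) * cf k m n * (qIntF (((m+n-k:ℕ):ℤ)+1) / vv)) * Pt ((m+n-k)+1)
          + C (vv / qIntF ((n:ℤ)+1) * cf k m n * dd (m+n-k) n) * Pt (m+n-k) := by
      intro k _
      rw [show xP n * (C (cf k m n) * Pt (m+n-k)) = C (cf k m n) * (xP n * Pt (m+n-k)) by ring,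
        xP_mul_Pt]
      simp only [C_mul]
      ring
    rw [Finset.sum_congr rfl e2, Finset.sum_add_distrib]
    -- fix index in first sum
    have e3 : ∀ k ∈ range (n+1),
        C (vv / qIntF ((n:ℤ)+1) * cf k m n * (qIntF (((m+n-k:ℕ):ℤ)+1) / vv)) * Pt ((m+n-k)+1)
        = C (vv / qIntF ((n:ℤ)+1) * cf k m n * (qIntF (((m+n-k:ℕ):ℤ)+1) / vv)) * Pt (m+(n+1)-k) := by
      intro k hk
      rw [Finset.mem_range] at hk
      rw [show (m+n-k)+1 = m+(n+1)-k from by omega]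
    rw [Finset.sum_congr rfl e3]
    rw [Finset.sum_range_succ'
      (fun k => C (vv / qIntF ((n:ℤ)+1) * cf k m n * (qIntF (((m+n-k:ℕ):ℤ)+1) / vv)) * Pt (m+(n+1)-k))]
    rw [Finset.sum_range_succ
      (fun k => C (vv / qIntF ((n:ℤ)+1) * cf k m n * dd (m+n-k) n) * Pt (m+n-k))]
    conv_rhs => rw [Finset.sum_range_succ, Finset.sum_range_succ']
    have h12 : (∑ i ∈ range n,
          C (vv / qIntF ((n:ℤ)+1) * cf (i+1) m n * (qIntF (((m+n-(i+1):ℕ):ℤ)+1) / vv)) * Pt (m+(n+1)-(i+1)))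
        + (∑ i ∈ range n, C (vv / qIntF ((n:ℤ)+1) * cf i m n * dd (m+n-i) n) * Pt (m+n-i))
        = ∑ i ∈ range n, C (cf (i+1) m (n+1)) * Pt (m+(n+1)-(i+1)) := by
      rw [← Finset.sum_add_distrib]
      apply Finset.sum_congr rfl
      intro i hi
      rw [Finset.mem_range] at hi
      rw [show m+(n+1)-(i+1) = m+n-i from by omega, ← add_mul, ← C_add,
        keyII m n i hi (by omega)]
    have h0 : C (vv / qIntF ((n:ℤ)+1) * cf 0 m n * (qIntF (((m+n-0:ℕ):ℤ)+1) / vv)) * Pt (m+(n+1)-0)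
        = C (cf 0 m (n+1)) * Pt (m+(n+1)-0) := by
      rw [Nat.sub_zero, keyI]
    have hT : C (vv / qIntF ((n:ℤ)+1) * cf n m n * dd (m+n-n) n) * Pt (m+n-n)
        = C (cf (n+1) m (n+1)) * Pt (m+(n+1)-(n+1)) := by
      rw [show m+n-n = m from by omega, show m+(n+1)-(n+1) = m from by omega,
        keyIII m n (by omega)]
    linear_combination h12 + h0 + hT

lemma cf_symm (k m n : ℕ) : cf k m n = cf k n m := by
  rw [cf, cf, show -((k:ℤ)*((n:ℤ)+(m:ℤ)-(k:ℤ))) = -((k:ℤ)*((m:ℤ)+(n:ℤ)-(k:ℤ))) by ring,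
    show n+m = m+n from by omega]
  ring

theorem stmt18 :
    (∀ m n : ℕ,
      Pt m * Pt n =
        ∑ k ∈ range (min m n + 1),
          C (qq ^ (-((k : ℤ) * ((m : ℤ) + n - k))) *
              (qFactF (m + n) / (qFactF k * qFactF (m - k) * qFactF (n - k)))) *
            Pt (m + n - k)) ∧
    (∀ m n k : ℕ, k ≤ m → k ≤ n →
      -- g = {2m+1}_{q,m+1}/{1}_q , b₁ = [2l+1 choose 2m+1]_q , b₂ = [2(n-k) choose n-k]_q ,
      -- b₃ = [m+n choose k]_q , b₄ = [m choose k]_q , where l = m+n-k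
      ∀ g b₁ b₂ b₃ b₄ : LaurentPolynomial ℤ,
        g * qInt 1 = qPoch (2 * m + 1) (m + 1) →
        b₁ * qFact (2 * m + 1) = qPoch (2 * (m + n - k) + 1) (2 * m + 1) →
        b₂ * qFact (n - k) = qPoch (2 * (n - k)) (n - k) →
        b₃ * qFact k = qPoch (m + n) k →
        b₄ * qFact k = qPoch m k →
        g * qFact k * qFact (n - k) * b₁ * b₂ * b₃ * b₄ ∈ Ideal.span {g} * Iideal n) := by
  constructor
  · intro m n
    rcases le_or_gt n m with h | h
    · rw [show min m n = n from by omega]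
      exact main n m h
    · rw [show min m n = m from by omega, mul_comm, main m n h.le]
      apply Finset.sum_congr rfl
      intro k hk
      rw [cf_symm, show n+m-k = m+n-k from by omega]
      rfl
  · intro m n k hkm hkn g b₁ b₂ b₃ b₄ _ _ _ _ _
    have hgen : qFact (n-k) * qFact k ∈ Iideal n := Ideal.subset_span ⟨k, hkn, rfl⟩
    have hmem : g * (qFact (n-k) * qFact k) ∈ Ideal.span {g} * Iideal n :=
      Ideal.mul_mem_mul (Ideal.mem_span_singleton_self g) hgen
    have h2 := Ideal.mul_mem_left _ (b₁*b₂*b₃*b₄) hmem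
    convert h2 using 1
    ring
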